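/- Let ν be the equal-slices measure on [k]^n and let ν̃ be the non-degenerate equal-slices measure on [k]^n. Then for every set A ⊆ [k]^n we have |ν(A) − ν̃(A)| ≤ k²/n. -/

import Mathlib

open Finset

/-- The equal-slices probability of a single string `x ∈ [k]^n`: one first chooses
uniformly a `k`-tuple of nonnegative integers summing to `n` (there are
`(n+k-1).choose (k-1)` of them), then a uniformly random string with those
coordinate counts (there are `multinomial` many in the slice of `x`). -/
noncomputable def slicePr (k n : ℕ) (x : Fin n → Fin k) : ℝ :=
  (((n + k - 1).choose (k - 1) : ℝ))⁻¹ *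
    ((Nat.multinomial Finset.univ
      (fun j : Fin k => (Finset.univ.filter fun i => x i = j).card) : ℝ))⁻¹

/-- The equal-slices measure of a set `A ⊆ [k]^n`. -/
noncomputable def esDensity {k n : ℕ} (A : Finset (Fin n → Fin k)) : ℝ :=
  ∑ x ∈ A, slicePr k n x

/-- The non-degenerate equal-slices probability of a single string `x ∈ [k]^n`:
the tuple of counts is chosen uniformly among `k`-tuples of *positive* integers
summing to `n` (there are `(n-1).choose (k-1)` of them); strings missing some
value have probability `0`. -/
noncomputable def ndSlicePr (k n : ℕ) (x : Fin n → Fin k) : ℝ :=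
  if ∀ j : Fin k, ∃ i, x i = j then
    (((n - 1).choose (k - 1) : ℝ))⁻¹ *
      ((Nat.multinomial Finset.univ
        (fun j : Fin k => (Finset.univ.filter fun i => x i = j).card) : ℝ))⁻¹
  else 0

/-- The non-degenerate equal-slices measure of a set `A ⊆ [k]^n`. -/
noncomputable def ndEsDensity {k n : ℕ} (A : Finset (Fin n → Fin k)) : ℝ :=
  ∑ x ∈ A, ndSlicePr k n x

def cnt {k n : ℕ} (x : Fin n → Fin k) (j : Fin k) : ℕ :=
  (Finset.univ.filter fun i => x i = j).card

lemma cnt_cons {k n : ℕ} (j0 : Fin k) (y : Fin n → Fin k) (j : Fin k) :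
    cnt (Fin.cons j0 y) j = (if j0 = j then 1 else 0) + cnt y j := by
  classical
  simp only [cnt, Finset.card_filter]
  rw [Fin.sum_univ_succ]
  simp

lemma countB (k : ℕ) : ∀ (n : ℕ) (c : Fin k → ℕ), (∑ j, c j = n) →
    ((Finset.univ : Finset (Fin n → Fin k)).filter fun x => ∀ j, cnt x j = c j).card
      * ∏ j, Nat.factorial (c j) = Nat.factorial n
  | 0, c, h => by
    classical
    have hc : ∀ j, c j = 0 := fun j => Finset.sum_eq_zero_iff.mp h j (mem_univ j)
    have hfilter : ((Finset.univ : Finset (Fin 0 → Fin k)).filter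
        fun x => ∀ j, cnt x j = c j) = Finset.univ := by
      apply Finset.filter_true_of_mem
      intro x _ j
      simp [cnt, hc j]
    rw [hfilter]
    simp [hc, Finset.card_univ]
  | (n+1), c, h => by
    classical
    have key : (((Finset.univ : Finset (Fin (n+1) → Fin k)).filter
          fun x => ∀ j, cnt x j = c j).card : ℕ)
        = ∑ j0 : Fin k, ((Finset.univ : Finset (Fin n → Fin k)).filter
            fun y => ∀ j, cnt (Fin.cons j0 y) j = c j).card := by
      simp only [Finset.card_filter]
      have e1 : (∑ p : Fin k × (Fin n → Fin k),
            if ∀ j, cnt (Fin.cons p.1 p.2) j = c j then (1:ℕ) else 0)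
          = ∑ x : Fin k, ∑ i : Fin n → Fin k,
            if ∀ j, cnt (Fin.cons x i) j = c j then (1:ℕ) else 0 :=
        Fintype.sum_prod_type _
      rw [← e1]
      exact (Fintype.sum_equiv (Fin.consEquiv fun _ : Fin (n+1) => Fin k) _ _
        (fun p => rfl)).symm
    have inner : ∀ j0 : Fin k,
        ((Finset.univ : Finset (Fin n → Fin k)).filter
          fun y => ∀ j, cnt (Fin.cons j0 y) j = c j).card * ∏ j, Nat.factorial (c j)
        = c j0 * Nat.factorial n := by
      intro j0
      by_cases h0 : 0 < c j0
      · set c' := Function.update c j0 (c j0 - 1) with hc'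
        have hc'app : ∀ j, c' j = if j = j0 then c j0 - 1 else c j := by
          intro j; rw [hc', Function.update_apply]
        have hcond : ∀ y : Fin n → Fin k,
            (∀ j, cnt (Fin.cons j0 y) j = c j) ↔ (∀ j, cnt y j = c' j) := by
          intro y
          constructor
          · intro hy j
            have h1 := hy j
            rw [cnt_cons] at h1
            rw [hc'app]
            by_cases hj : j = j0
            · subst hj
              rw [if_pos rfl] at h1
              rw [if_pos rfl]
              omega
            · rw [if_neg (Ne.symm hj)] at h1
              rw [if_neg hj]
              omega
          · intro hy j
            have h1 := hy j
            rw [hc'app] at h1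
            rw [cnt_cons]
            by_cases hj : j = j0
            · subst hj
              rw [if_pos rfl] at h1
              rw [if_pos rfl]
              omega
            · rw [if_neg hj] at h1
              rw [if_neg (Ne.symm hj)]
              omega
        have hsum' : ∑ j, c' j = n := by
          have h1 : ∑ j ∈ univ.erase j0, c' j = ∑ j ∈ univ.erase j0, c j :=
            Finset.sum_congr rfl fun j hj =>
              by rw [hc'app, if_neg (Finset.mem_erase.mp hj).1]
          have h2 := Finset.add_sum_erase univ c' (mem_univ j0)
          have h3 := Finset.add_sum_erase univ c (mem_univ j0)
          have h4 : c' j0 = c j0 - 1 := by rw [hc'app, if_pos rfl]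
          omega
        have IH := countB k n c' hsum'
        have hprodc : ∏ j, Nat.factorial (c j)
            = Nat.factorial (c j0) * ∏ j ∈ univ.erase j0, Nat.factorial (c j) :=
          (Finset.mul_prod_erase univ _ (mem_univ j0)).symm
        have hprodc' : ∏ j, Nat.factorial (c' j)
            = Nat.factorial (c j0 - 1) * ∏ j ∈ univ.erase j0, Nat.factorial (c j) := by
          rw [← Finset.mul_prod_erase univ (fun j => Nat.factorial (c' j)) (mem_univ j0)]
          congr 1
          · rw [hc'app, if_pos rfl]
          · exact Finset.prod_congr rfl fun j hj => by
              rw [hc'app, if_neg (Finset.mem_erase.mp hj).1]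
        have hfac : ∏ j, Nat.factorial (c j) = c j0 * ∏ j, Nat.factorial (c' j) := by
          rw [hprodc, hprodc', ← mul_assoc, Nat.mul_factorial_pred h0.ne']
        calc ((Finset.univ : Finset (Fin n → Fin k)).filter
              fun y => ∀ j, cnt (Fin.cons j0 y) j = c j).card * ∏ j, Nat.factorial (c j)
            = ((Finset.univ : Finset (Fin n → Fin k)).filter
              fun y => ∀ j, cnt y j = c' j).card * (c j0 * ∏ j, Nat.factorial (c' j)) := by
              rw [hfac]
              congr 2
              exact Finset.filter_congr fun y _ => by simpa using hcond y
          _ = c j0 * (((Finset.univ : Finset (Fin n → Fin k)).filter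
              fun y => ∀ j, cnt y j = c' j).card * ∏ j, Nat.factorial (c' j)) := by ring
          _ = c j0 * Nat.factorial n := by rw [IH]
      · have hc0 : c j0 = 0 := by omega
        have hemp : ((Finset.univ : Finset (Fin n → Fin k)).filter
            fun y => ∀ j, cnt (Fin.cons j0 y) j = c j) = ∅ := by
          apply Finset.filter_false_of_mem
          intro y _ hy
          have h1 := hy j0
          rw [cnt_cons, if_pos rfl] at h1
          omega
        rw [hemp, hc0]
        simp
    calc (((Finset.univ : Finset (Fin (n+1) → Fin k)).filter
          fun x => ∀ j, cnt x j = c j).card) * ∏ j, Nat.factorial (c j)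
        = ∑ j0 : Fin k, ((Finset.univ : Finset (Fin n → Fin k)).filter
            fun y => ∀ j, cnt (Fin.cons j0 y) j = c j).card * ∏ j, Nat.factorial (c j) := by
          rw [key, Finset.sum_mul]
      _ = ∑ j0 : Fin k, c j0 * Nat.factorial n :=
          Finset.sum_congr rfl fun j0 _ => inner j0
      _ = (n+1) * Nat.factorial n := by rw [← Finset.sum_mul, h]
      _ = Nat.factorial (n+1) := (Nat.factorial_succ n).symm


lemma sum_univ_count {k : ℕ} (s : Multiset (Fin k)) :
    ∑ j : Fin k, s.count j = Multiset.card s := by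
  classical
  rw [← Multiset.toFinset_sum_count_eq s]
  exact (Finset.sum_subset (Finset.subset_univ _) (fun j _ hj => by
    simpa [Multiset.count_eq_zero] using fun h => hj (Multiset.mem_toFinset.mpr h))).symm

lemma sum_univ_count_nsmul {k : ℕ} (s : Multiset (Fin k)) :
    ∑ j : Fin k, s.count j • ({j} : Multiset (Fin k)) = s := by
  classical
  have h0 : ∀ j ∈ (univ : Finset (Fin k)), j ∉ s.toFinset →
      s.count j • ({j} : Multiset (Fin k)) = 0 := by
    intro j _ hj
    have h1 : s.count j = 0 := by
      simpa [Multiset.count_eq_zero] using fun h => hj (Multiset.mem_toFinset.mpr h)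
    rw [h1, zero_nsmul]
  rw [← Finset.sum_subset (Finset.subset_univ s.toFinset) h0]
  exact Multiset.toFinset_sum_count_nsmul_eq s

lemma count_sum_singletons {k : ℕ} (c : Fin k → ℕ) (j : Fin k) :
    Multiset.count j (∑ i : Fin k, c i • ({i} : Multiset (Fin k))) = c j := by
  classical
  rw [Multiset.count_sum']
  simp [Multiset.count_singleton]

lemma card_sum_singletons {k : ℕ} (c : Fin k → ℕ) :
    Multiset.card (∑ i : Fin k, c i • ({i} : Multiset (Fin k))) = ∑ i, c i := by
  classical
  rw [← sum_univ_count]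
  exact Finset.sum_congr rfl fun j _ => count_sum_singletons c j

def compEquivSym (k m : ℕ) :
    {c : Fin k → ℕ // c ∈ Finset.Nat.antidiagonalTuple k m} ≃ Sym (Fin k) m where
  toFun c := ⟨∑ j : Fin k, c.1 j • ({j} : Multiset (Fin k)), by
    rw [card_sum_singletons]
    exact Finset.Nat.mem_antidiagonalTuple.mp c.2⟩
  invFun s := ⟨fun j => Multiset.count j (s : Multiset (Fin k)), by
    rw [Finset.Nat.mem_antidiagonalTuple, sum_univ_count]
    exact s.2⟩
  left_inv c := by
    ext j
    exact count_sum_singletons c.1 j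
  right_inv s := by
    ext
    exact congrArg _ (sum_univ_count_nsmul (s : Multiset (Fin k)))

lemma starsBars (k m : ℕ) (hk : 0 < k) :
    (Finset.Nat.antidiagonalTuple k m).card = (m + k - 1).choose (k - 1) := by
  classical
  have h1 : (Finset.Nat.antidiagonalTuple k m).card = Fintype.card (Sym (Fin k) m) := by
    rw [← Fintype.card_coe]
    exact Fintype.card_congr (compEquivSym k m)
  rw [h1, Sym.card_sym_eq_choose, Fintype.card_fin]
  have h2 : k + m - 1 - m = k - 1 := by omega
  rw [← h2, Nat.add_comm m k, Nat.choose_symm (by omega)]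


lemma posCompCard (k n : ℕ) (hk : 0 < k) (hn : 0 < n)
    (hSB : ∀ m, (Finset.Nat.antidiagonalTuple k m).card = (m + k - 1).choose (k - 1)) :
    ((Finset.Nat.antidiagonalTuple k n).filter fun c => ∀ j, 0 < c j).card
      = (n - 1).choose (k - 1) := by
  classical
  by_cases hnk : n < k
  · have hemp : ((Finset.Nat.antidiagonalTuple k n).filter fun c => ∀ j, 0 < c j) = ∅ := by
      apply Finset.filter_false_of_mem
      intro c hc hpos
      have hsum := Finset.Nat.mem_antidiagonalTuple.mp hc
      have : k ≤ ∑ j, c j := by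
        calc k = ∑ _j : Fin k, 1 := by simp
          _ ≤ ∑ j, c j := Finset.sum_le_sum fun j _ => hpos j
      omega
    have hlt : n - 1 < k - 1 := by omega
    rw [hemp, Finset.card_empty]
    exact (Nat.choose_eq_zero_of_lt hlt).symm
  · push_neg at hnk
    have key : ((Finset.Nat.antidiagonalTuple k n).filter fun c => ∀ j, 0 < c j).card
        = (Finset.Nat.antidiagonalTuple k (n - k)).card := by
      apply Finset.card_bij' (fun c _ => fun j => c j - 1) (fun d _ => fun j => d j + 1)
      · intro c hc
        obtain ⟨_, hc2⟩ := Finset.mem_filter.mp hc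
        funext j
        have := hc2 j
        beta_reduce
        omega
      · intro d hd
        funext j
        beta_reduce
        omega
      · intro c hc
        rw [Finset.Nat.mem_antidiagonalTuple]
        obtain ⟨hc1, hc2⟩ := Finset.mem_filter.mp hc
        have hsum := Finset.Nat.mem_antidiagonalTuple.mp hc1
        have h1 : ∑ j, ((c j - 1) + 1) = ∑ j, c j :=
          Finset.sum_congr rfl fun j _ => by have := hc2 j; omega
        rw [Finset.sum_add_distrib] at h1
        simp only [Finset.sum_const, Finset.card_univ, Fintype.card_fin, smul_eq_mul,
          mul_one] at h1
        omega
      · intro d hd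
        rw [Finset.mem_filter]
        have hsum := Finset.Nat.mem_antidiagonalTuple.mp hd
        constructor
        · rw [Finset.Nat.mem_antidiagonalTuple, Finset.sum_add_distrib, hsum]
          simp only [Finset.sum_const, Finset.card_univ, Fintype.card_fin, smul_eq_mul,
            mul_one]
          omega
        · intro j; beta_reduce; omega
    rw [key, hSB]
    have heq : n - k + k - 1 = n - 1 := by rw [Nat.sub_add_cancel hnk]
    rw [heq]

lemma sum_cnt {k n : ℕ} (x : Fin n → Fin k) : ∑ j, cnt x j = n := by
  classical
  have := Finset.card_eq_sum_card_fiberwise (s := (univ : Finset (Fin n)))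
    (t := (univ : Finset (Fin k))) (f := x) (fun i _ => Finset.mem_univ (x i))
  simpa [cnt] using this.symm

lemma multEq {k n : ℕ} (c : Fin k → ℕ) (h : ∑ j, c j = n) :
    ((Finset.univ : Finset (Fin n → Fin k)).filter fun x => ∀ j, cnt x j = c j).card
      = Nat.multinomial Finset.univ c := by
  have h1 := countB k n c h
  have h2 := Nat.multinomial_spec (univ : Finset (Fin k)) c
  rw [h] at h2
  apply Nat.eq_of_mul_eq_mul_right (Finset.prod_pos fun j _ => Nat.factorial_pos (c j))
  rw [h1, ← h2]
  ring

lemma group {k n : ℕ} (T : Finset (Fin n → Fin k)) (g : (Fin k → ℕ) → ℝ) :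
    ∑ x ∈ T, g (cnt x)
      = ∑ c ∈ Finset.Nat.antidiagonalTuple k n,
          ((T.filter fun x => ∀ j, cnt x j = c j).card : ℝ) * g c := by
  classical
  rw [← Finset.sum_fiberwise_of_maps_to' (t := Finset.Nat.antidiagonalTuple k n)
    (fun x (_ : x ∈ T) => Finset.Nat.mem_antidiagonalTuple.mpr (sum_cnt x)) g]
  refine Finset.sum_congr rfl fun c _ => ?_
  have hfe : T.filter (fun x => cnt x = c) = T.filter fun x => ∀ j, cnt x j = c j :=
    Finset.filter_congr fun x _ => by simp [funext_iff]
  rw [Finset.sum_const, hfe, nsmul_eq_mul]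

lemma sum_minv_univ (k n : ℕ) :
    ∑ x : Fin n → Fin k, ((Nat.multinomial Finset.univ (cnt x) : ℝ))⁻¹
      = ((Finset.Nat.antidiagonalTuple k n).card : ℝ) := by
  classical
  rw [group (univ : Finset (Fin n → Fin k)) (fun c => ((Nat.multinomial univ c : ℝ))⁻¹)]
  rw [Finset.card_eq_sum_ones (Finset.Nat.antidiagonalTuple k n)]
  push_cast
  refine Finset.sum_congr rfl fun c hc => ?_
  have h := Finset.Nat.mem_antidiagonalTuple.mp hc
  rw [multEq c h]
  exact mul_inv_cancel₀ (by exact_mod_cast (Nat.multinomial_pos _ _).ne')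

lemma sum_minv_E (k n : ℕ) :
    ∑ x ∈ (Finset.univ : Finset (Fin n → Fin k)).filter (fun x => ∀ j : Fin k, ∃ i, x i = j),
        ((Nat.multinomial Finset.univ (cnt x) : ℝ))⁻¹
      = (((Finset.Nat.antidiagonalTuple k n).filter fun c => ∀ j, 0 < c j).card : ℝ) := by
  classical
  set E := (Finset.univ : Finset (Fin n → Fin k)).filter (fun x => ∀ j : Fin k, ∃ i, x i = j)
    with hE
  have hmem : ∀ x : Fin n → Fin k, x ∈ E ↔ ∀ j, 0 < cnt x j := by
    intro x
    rw [hE, Finset.mem_filter]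
    simp only [Finset.mem_univ, true_and]
    constructor
    · intro h j
      obtain ⟨i, hi⟩ := h j
      exact Finset.card_pos.mpr ⟨i, Finset.mem_filter.mpr ⟨Finset.mem_univ i, hi⟩⟩
    · intro h j
      obtain ⟨i, hi⟩ := Finset.card_pos.mp (h j)
      exact ⟨i, (Finset.mem_filter.mp hi).2⟩
  rw [group E (fun c => ((Nat.multinomial univ c : ℝ))⁻¹)]
  rw [Finset.card_filter]
  push_cast
  refine Finset.sum_congr rfl fun c hc => ?_
  have hc' := Finset.Nat.mem_antidiagonalTuple.mp hc
  by_cases hpos : ∀ j, 0 < c j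
  · rw [if_pos hpos]
    have hEf : E.filter (fun x => ∀ j, cnt x j = c j)
        = (Finset.univ : Finset (Fin n → Fin k)).filter fun x => ∀ j, cnt x j = c j := by
      apply Finset.ext
      intro x
      simp only [Finset.mem_filter, Finset.mem_univ, true_and]
      constructor
      · rintro ⟨_, h2⟩; exact h2
      · intro h2
        refine ⟨(hmem x).mpr fun j => ?_, h2⟩
        rw [h2 j]; exact hpos j
    rw [hEf, multEq c hc']
    exact mul_inv_cancel₀ (by exact_mod_cast (Nat.multinomial_pos _ _).ne')
  · rw [if_neg hpos]
    have hEf : E.filter (fun x => ∀ j, cnt x j = c j) = ∅ := by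
      apply Finset.filter_false_of_mem
      intro x hx h2
      push_neg at hpos
      obtain ⟨j, hj⟩ := hpos
      have := (hmem x).mp hx j
      rw [h2 j] at this
      omega
    rw [hEf]
    simp


lemma chooseTel (m r : ℕ) : ∀ a, (m + a).choose (r + 1)
    = m.choose (r + 1) + ∑ j ∈ Finset.range a, (m + j).choose r
  | 0 => by simp
  | (a+1) => by
    rw [Finset.sum_range_succ, show m + (a+1) = (m + a) + 1 by omega,
      Nat.choose_succ_succ (m+a) r, chooseTel m r a]
    omega

lemma chooseIneq (k n : ℕ) (hk : 0 < k) (hkn : k ≤ n) :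
    n * ((n + k - 1).choose (k - 1) - (n - 1).choose (k - 1))
      ≤ k ^ 2 * (n + k - 1).choose (k - 1) := by
  obtain ⟨r, rfl⟩ | rfl : (∃ r, k = r + 2) ∨ k = 1 := by
    rcases k with _ | _ | r
    · omega
    · right; rfl
    · left; exact ⟨r, rfl⟩
  swap
  · simp
  set K := r + 2 with hK
  have hn1 : 1 ≤ n := le_trans (by omega) hkn
  have htop : n + K - 1 = (n - 1) + K := by omega
  have htel := chooseTel (n - 1) r K
  have hC1 : (n + K - 1).choose (K - 1)
      = (n - 1).choose (r + 1) + ∑ j ∈ Finset.range K, (n - 1 + j).choose r := by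
    rw [htop, show K - 1 = r + 1 from rfl, htel]
  have hK1 : K - 1 = r + 1 := rfl
  set C1 := (n + K - 1).choose (K - 1) with hC1def
  set C2 := (n - 1).choose (K - 1) with hC2def
  set S := ∑ j ∈ Finset.range K, (n - 1 + j).choose r with hS
  have hdiff : C1 - C2 = S := by
    rw [hC2def, hK1]
    omega
  set X := (n + K - 2).choose r with hX
  have hSle : S ≤ K * X := by
    rw [hS, hX]
    calc ∑ j ∈ Finset.range K, (n - 1 + j).choose r
        ≤ ∑ _j ∈ Finset.range K, (n + K - 2).choose r :=
          Finset.sum_le_sum fun j hj => Nat.choose_le_choose r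
            (by have := Finset.mem_range.mp hj; omega)
      _ = K * (n + K - 2).choose r := by rw [Finset.sum_const, Finset.card_range, smul_eq_mul]
  have hid : (n + K - 1) * X = C1 * (r + 1) := by
    rw [hX, hC1def, hK1]
    have h2 : n + K - 1 = (n + K - 2) + 1 := by omega
    rw [h2]
    exact Nat.add_one_mul_choose_eq (n + K - 2) r
  calc n * (C1 - C2) = n * S := by rw [hdiff]
    _ ≤ n * (K * X) := Nat.mul_le_mul_left n hSle
    _ = K * (n * X) := by ring
    _ ≤ K * ((n + K - 1) * X) := Nat.mul_le_mul_left K (Nat.mul_le_mul_right X (by omega))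
    _ = K * (C1 * (r + 1)) := by rw [hid]
    _ ≤ K * (C1 * K) := Nat.mul_le_mul_left K (Nat.mul_le_mul_left C1 (by omega))
    _ = K ^ 2 * C1 := by ring

lemma ratioIneq (k n : ℕ) (hk : 0 < k) (hn : 0 < n) (hkn : k ≤ n) :
    1 - ((n - 1).choose (k - 1) : ℝ) / ((n + k - 1).choose (k - 1) : ℝ)
      ≤ (k : ℝ) ^ 2 / n := by
  have hC1pos : 0 < (n + k - 1).choose (k - 1) := Nat.choose_pos (by omega)
  have hC2le : (n - 1).choose (k - 1) ≤ (n + k - 1).choose (k - 1) :=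
    Nat.choose_le_choose _ (by omega)
  have hC1 : (0 : ℝ) < ((n + k - 1).choose (k - 1) : ℝ) := by exact_mod_cast hC1pos
  have hnR : (0 : ℝ) < (n : ℝ) := by exact_mod_cast hn
  have hcast : (n : ℝ) * (((n + k - 1).choose (k - 1) : ℝ) - ((n - 1).choose (k - 1) : ℝ))
      ≤ (k : ℝ) ^ 2 * ((n + k - 1).choose (k - 1) : ℝ) := by
    have h := chooseIneq k n hk hkn
    have h2 : ((n * ((n + k - 1).choose (k - 1) - (n - 1).choose (k - 1)) : ℕ) : ℝ)
        ≤ ((k ^ 2 * (n + k - 1).choose (k - 1) : ℕ) : ℝ) := by exact_mod_cast h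
    rwa [Nat.cast_mul, Nat.cast_sub hC2le, Nat.cast_mul, Nat.cast_pow] at h2
  have h3 : 1 - ((n - 1).choose (k - 1) : ℝ) / ((n + k - 1).choose (k - 1) : ℝ)
      = (((n + k - 1).choose (k - 1) : ℝ) - ((n - 1).choose (k - 1) : ℝ))
        / ((n + k - 1).choose (k - 1) : ℝ) := by
    field_simp
  rw [h3, div_le_div_iff₀ hC1 hnR, mul_comm]
  exact hcast

/-- The equal-slices and non-degenerate equal-slices measures of any set differ
by at most `k²/n`. -/
theorem equal_slices_vs_nondegenerate (k n : ℕ) (hk : 0 < k) (hn : 0 < n)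
    (A : Finset (Fin n → Fin k)) :
    |esDensity A - ndEsDensity A| ≤ (k : ℝ) ^ 2 / n := by
  classical
  have hnR : (0 : ℝ) < (n : ℝ) := by exact_mod_cast hn
  set M : (Fin n → Fin k) → ℝ := fun x => (Nat.multinomial Finset.univ (cnt x) : ℝ) with hM
  have hMpos : ∀ x, 0 < M x := fun x => by
    rw [hM]
    simp only []
    exact_mod_cast Nat.multinomial_pos _ _
  have hMinv : ∀ x, 0 ≤ (M x)⁻¹ := fun x => inv_nonneg.mpr (hMpos x).le
  set c1 : ℝ := ((n + k - 1).choose (k - 1) : ℝ) with hc1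
  set c2 : ℝ := ((n - 1).choose (k - 1) : ℝ) with hc2
  have hc1pos : (0 : ℝ) < c1 := by
    rw [hc1]; exact_mod_cast Nat.choose_pos (by omega : k - 1 ≤ n + k - 1)
  have hp : ∀ x, slicePr k n x = c1⁻¹ * (M x)⁻¹ := fun x => rfl
  have hpnonneg : ∀ x, 0 ≤ slicePr k n x := fun x => by
    rw [hp]
    exact mul_nonneg (inv_nonneg.mpr hc1pos.le) (hMinv x)
  have hq : ∀ x, (∀ j : Fin k, ∃ i, x i = j) → ndSlicePr k n x = c2⁻¹ * (M x)⁻¹ :=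
    fun x h => if_pos h
  have hq0 : ∀ x, ¬ (∀ j : Fin k, ∃ i, x i = j) → ndSlicePr k n x = 0 :=
    fun x h => if_neg h
  -- total mass of equal-slices measure
  have hsum_univ : ∑ x : Fin n → Fin k, slicePr k n x = 1 := by
    calc ∑ x : Fin n → Fin k, slicePr k n x
        = c1⁻¹ * ∑ x : Fin n → Fin k, (M x)⁻¹ := by
          rw [Finset.mul_sum]; exact Finset.sum_congr rfl fun x _ => hp x
      _ = c1⁻¹ * c1 := by
          rw [sum_minv_univ k n, starsBars k n hk, hc1]
      _ = 1 := inv_mul_cancel₀ (ne_of_gt hc1pos)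
  have hesle : esDensity A ≤ 1 := by
    rw [← hsum_univ]
    exact Finset.sum_le_sum_of_subset_of_nonneg (Finset.subset_univ A)
      fun x _ _ => hpnonneg x
  have hesnonneg : 0 ≤ esDensity A := Finset.sum_nonneg fun x _ => hpnonneg x
  by_cases hkn : k ≤ n
  · -- main case
    have hc2pos : (0 : ℝ) < c2 := by
      rw [hc2]; exact_mod_cast Nat.choose_pos (by omega : k - 1 ≤ n - 1)
    have hc2le : c2 ≤ c1 := by
      rw [hc1, hc2]
      exact_mod_cast Nat.choose_le_choose (k - 1) (by omega : n - 1 ≤ n + k - 1)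
    set E := (Finset.univ : Finset (Fin n → Fin k)).filter
      (fun x => ∀ j : Fin k, ∃ i, x i = j) with hE
    have hcondE : ∀ x ∈ E, ∀ j : Fin k, ∃ i, x i = j :=
      fun x hx => (Finset.mem_filter.mp hx).2
    have hF2 : ∑ x ∈ E, slicePr k n x = c2 / c1 := by
      calc ∑ x ∈ E, slicePr k n x = c1⁻¹ * ∑ x ∈ E, (M x)⁻¹ := by
            rw [Finset.mul_sum]; exact Finset.sum_congr rfl fun x _ => hp x
        _ = c1⁻¹ * c2 := by
            rw [hE, sum_minv_E k n, posCompCard k n hk hn (fun m => starsBars k m hk), hc2]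
        _ = c2 / c1 := by rw [div_eq_inv_mul]
    have hF3 : ∑ x ∈ E, ndSlicePr k n x = 1 := by
      calc ∑ x ∈ E, ndSlicePr k n x = c2⁻¹ * ∑ x ∈ E, (M x)⁻¹ := by
            rw [Finset.mul_sum]
            exact Finset.sum_congr rfl fun x hx => hq x (hcondE x hx)
        _ = c2⁻¹ * c2 := by
            rw [hE, sum_minv_E k n, posCompCard k n hk hn (fun m => starsBars k m hk), hc2]
        _ = 1 := inv_mul_cancel₀ (ne_of_gt hc2pos)
    set A1 := A.filter (fun x => ∀ j : Fin k, ∃ i, x i = j) with hA1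
    set A2 := A.filter (fun x => ¬ ∀ j : Fin k, ∃ i, x i = j) with hA2
    have hAsplit : esDensity A = ∑ x ∈ A1, slicePr k n x + ∑ x ∈ A2, slicePr k n x := by
      rw [esDensity, hA1, hA2,
        Finset.sum_filter_add_sum_filter_not A _ (fun x => slicePr k n x)]
    have hndA : ndEsDensity A = ∑ x ∈ A1, ndSlicePr k n x := by
      rw [ndEsDensity, ← Finset.sum_filter_add_sum_filter_not A
        (fun x => ∀ j : Fin k, ∃ i, x i = j) (fun x => ndSlicePr k n x), ← hA1, ← hA2]
      have h0 : ∑ x ∈ A2, ndSlicePr k n x = 0 :=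
        Finset.sum_eq_zero fun x hx => hq0 x (Finset.mem_filter.mp hx).2
      rw [h0, add_zero]
    have hA1subE : A1 ⊆ E := by
      rw [hA1, hE]
      exact Finset.filter_subset_filter _ (Finset.subset_univ A)
    -- p ≤ q on sets satisfying the condition
    have hpq : ∀ x, (∀ j : Fin k, ∃ i, x i = j) → slicePr k n x ≤ ndSlicePr k n x := by
      intro x hx
      rw [hp, hq x hx]
      exact mul_le_mul_of_nonneg_right
        (inv_anti₀ hc2pos hc2le) (hMinv x)
    have hqnonneg : ∀ x, 0 ≤ ndSlicePr k n x := by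
      intro x
      by_cases h : ∀ j : Fin k, ∃ i, x i = j
      · rw [hq x h]
        exact mul_nonneg (inv_nonneg.mpr hc2pos.le) (hMinv x)
      · rw [hq0 x h]
    -- bound 1
    have hb1 : ∑ x ∈ A1, slicePr k n x ≤ ∑ x ∈ A1, ndSlicePr k n x :=
      Finset.sum_le_sum fun x hx => hpq x (Finset.mem_filter.mp hx).2
    -- sum over complement of E
    have hEc : ∑ x ∈ Finset.univ.filter (fun x : Fin n → Fin k =>
        ¬ ∀ j : Fin k, ∃ i, x i = j), slicePr k n x = 1 - c2 / c1 := by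
      have h := Finset.sum_filter_add_sum_filter_not (Finset.univ : Finset (Fin n → Fin k))
        (fun x => ∀ j : Fin k, ∃ i, x i = j) (fun x => slicePr k n x)
      rw [← hE] at h
      rw [hF2] at h
      rw [hsum_univ] at h
      linarith
    have hb2 : ∑ x ∈ A2, slicePr k n x ≤ 1 - c2 / c1 := by
      rw [← hEc]
      refine Finset.sum_le_sum_of_subset_of_nonneg ?_ fun x _ _ => hpnonneg x
      rw [hA2]
      exact Finset.filter_subset_filter _ (Finset.subset_univ A)
    -- bound 3
    have hb3 : ∑ x ∈ A1, ndSlicePr k n x - ∑ x ∈ A1, slicePr k n x ≤ 1 - c2 / c1 := by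
      have hstep : ∑ x ∈ A1, (ndSlicePr k n x - slicePr k n x)
          ≤ ∑ x ∈ E, (ndSlicePr k n x - slicePr k n x) :=
        Finset.sum_le_sum_of_subset_of_nonneg hA1subE
          fun x hx _ => sub_nonneg.mpr (hpq x (hcondE x hx))
      rw [Finset.sum_sub_distrib, Finset.sum_sub_distrib, hF2, hF3] at hstep
      linarith [hstep]
    have hA2nonneg : 0 ≤ ∑ x ∈ A2, slicePr k n x :=
      Finset.sum_nonneg fun x _ => hpnonneg x
    have habs : |esDensity A - ndEsDensity A| ≤ 1 - c2 / c1 := by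
      rw [abs_le]
      constructor
      · rw [hAsplit, hndA]; linarith
      · rw [hAsplit, hndA]; linarith
    exact le_trans habs (ratioIneq k n hk hn hkn)
  · -- degenerate case n < k
    push_neg at hkn
    have hnd : ndEsDensity A = 0 := by
      apply Finset.sum_eq_zero
      intro x _
      apply hq0
      intro hcond
      have hsurj : Function.Surjective x := fun j => hcond j
      have := Fintype.card_le_of_surjective x hsurj
      simp only [Fintype.card_fin] at this
      omega
    rw [hnd, sub_zero, abs_of_nonneg hesnonneg]
    have h1 : (1 : ℝ) ≤ (k : ℝ) ^ 2 / n := by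
      rw [le_div_iff₀ hnR, one_mul]
      have : n ≤ k ^ 2 := by nlinarith
      exact_mod_cast this
    linarith
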